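/- Let n ≥ 1 and let t ∈ ℝ be nonzero. Let G : ℙ_n × ℙ_n → ℙ_n be a map satisfying G(A, A) = A for all A ∈ ℙ_n, and such that for all A, B ∈ ℙ_n, G(A, B) = I implies B = A^{1 − 1/t}. Then for all A, B ∈ ℙ_n and X ∈ ℙ_n, if G(A # X^{-1}, B # X^{-1}) = I then X = A ♮_t B; in particular, the equation G(A # X^{-1}, B # X^{-1}) = I has at most one positive definite solution X, namely A ♮_t B. -/

import Mathlib

open Matrix
open scoped ComplexOrder

/-- Real power `A^t = exp(t · log A)` of a Hermitian positive definite matrix, defined via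
the functional calculus (spectral decomposition). -/
noncomputable def mpow {n : ℕ} (A : Matrix (Fin n) (Fin n) ℂ) (t : ℝ) :
    Matrix (Fin n) (Fin n) ℂ :=
  if hA : A.IsHermitian then
    (hA.eigenvectorUnitary : Matrix (Fin n) (Fin n) ℂ) *
      Matrix.diagonal (fun i => ((hA.eigenvalues i ^ t : ℝ) : ℂ)) *
      (star (hA.eigenvectorUnitary : Matrix (Fin n) (Fin n) ℂ))
  else A

/-- Logarithm of a Hermitian positive definite matrix via the functional calculus. -/
noncomputable def mlog {n : ℕ} (A : Matrix (Fin n) (Fin n) ℂ) : Matrix (Fin n) (Fin n) ℂ :=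
  if hA : A.IsHermitian then
    (hA.eigenvectorUnitary : Matrix (Fin n) (Fin n) ℂ) *
      Matrix.diagonal (fun i => ((Real.log (hA.eigenvalues i) : ℝ) : ℂ)) *
      (star (hA.eigenvectorUnitary : Matrix (Fin n) (Fin n) ℂ))
  else A

variable {n : ℕ} {A B C Y : Matrix (Fin n) (Fin n) ℂ}

lemma mpow_eq (hA : A.IsHermitian) (t : ℝ) :
    mpow A t = cfc (fun x : ℝ => x ^ t) A := by
  rw [hA.cfc_eq, mpow, dif_pos hA]
  rfl

lemma spectrum_pos (hA : A.PosDef) : ∀ x ∈ spectrum ℝ A, 0 < x := by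
  rw [hA.isHermitian.spectrum_real_eq_range_eigenvalues]
  rintro x ⟨i, rfl⟩
  exact hA.eigenvalues_pos i

lemma posDef_conj (hB : B.PosDef) (hC : IsUnit C) : (C * B * Cᴴ).PosDef := by
  rw [Matrix.posDef_iff_dotProduct_mulVec]
  constructor
  · have := Matrix.isHermitian_conjTranspose_mul_mul Cᴴ hB.1
    simpa using this
  · intro x hx
    have hinj : Function.Injective (Cᴴ.mulVec) :=
      Matrix.mulVec_injective_iff_isUnit.2
        (by simpa [Matrix.star_eq_conjTranspose] using hC.star)
    have hx' : Cᴴ *ᵥ x ≠ 0 := fun h => hx (hinj (by simpa using h))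
    simpa only [Matrix.star_mulVec, Matrix.dotProduct_mulVec, Matrix.vecMul_vecMul,
      Matrix.conjTranspose_conjTranspose, Matrix.mul_assoc] using hB.dotProduct_mulVec_pos hx'

lemma cfc_posDef (hA : A.PosDef) {f : ℝ → ℝ}
    (hf : ∀ x ∈ spectrum ℝ A, 0 < f x) : (cfc f A).PosDef := by
  have hA' : A.IsHermitian := hA.1
  rw [hA'.cfc_eq, Matrix.IsHermitian.cfc]
  have hU : IsUnit (hA'.eigenvectorUnitary : Matrix (Fin n) (Fin n) ℂ) :=
    ⟨Unitary.toUnits hA'.eigenvectorUnitary, rfl⟩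
  have hD : (Matrix.diagonal ((RCLike.ofReal : ℝ → ℂ) ∘ f ∘ hA'.eigenvalues)).PosDef := by
    rw [Matrix.posDef_diagonal_iff]
    intro i
    have : 0 < f (hA'.eigenvalues i) := by
      refine hf _ ?_
      rw [hA'.spectrum_real_eq_range_eigenvalues]
      exact ⟨i, rfl⟩
    show (0:ℂ) < ((f (hA'.eigenvalues i) : ℝ) : ℂ)
    exact_mod_cast this
  simpa [Matrix.star_eq_conjTranspose] using posDef_conj hD hU

lemma mpow_posDef (hA : A.PosDef) (t : ℝ) : (mpow A t).PosDef := by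
  rw [mpow_eq hA.1]
  exact cfc_posDef hA fun x hx => Real.rpow_pos_of_pos (spectrum_pos hA x hx) t

lemma contOnSpec (f : ℝ → ℝ) : ContinuousOn f (spectrum ℝ A) :=
  Matrix.finite_real_spectrum.continuousOn f

lemma contOnSpecIm (f g : ℝ → ℝ) : ContinuousOn f (g '' spectrum ℝ A) :=
  (Matrix.finite_real_spectrum.image g).continuousOn f

lemma mpow_mul_mpow (hA : A.PosDef) (s u : ℝ) :
    mpow A s * mpow A u = mpow A (s + u) := by
  have hsa : IsSelfAdjoint A := hA.1
  rw [mpow_eq hA.1, mpow_eq hA.1, mpow_eq hA.1,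
    ← cfc_mul _ _ A (contOnSpec _) (contOnSpec _)]
  exact cfc_congr fun x hx => (Real.rpow_add (spectrum_pos hA x hx) s u).symm

lemma mpow_one (hA : A.PosDef) : mpow A 1 = A := by
  have hsa : IsSelfAdjoint A := hA.1
  rw [mpow_eq hA.1]
  have : cfc (fun x : ℝ => x ^ (1:ℝ)) A = cfc (fun x : ℝ => x) A :=
    cfc_congr fun x _ => Real.rpow_one x
  rw [this, cfc_id' ℝ A]

lemma mpow_zero (hA : A.PosDef) : mpow A 0 = 1 := by
  have hsa : IsSelfAdjoint A := hA.1
  rw [mpow_eq hA.1]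
  have : cfc (fun x : ℝ => x ^ (0:ℝ)) A = cfc (fun _ : ℝ => (1:ℝ)) A :=
    cfc_congr fun x _ => Real.rpow_zero x
  rw [this, cfc_const_one ℝ A]

lemma mpow_mpow (hA : A.PosDef) (s u : ℝ) :
    mpow (mpow A s) u = mpow A (s * u) := by
  have hsa : IsSelfAdjoint A := hA.1
  have h1 : (mpow A s).IsHermitian := (mpow_posDef hA s).1
  rw [mpow_eq h1, mpow_eq hA.1, mpow_eq hA.1,
    ← cfc_comp (fun x : ℝ => x ^ u) (fun x : ℝ => x ^ s) A hsa
      (contOnSpecIm _ _) (contOnSpec _)]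
  exact cfc_congr fun x hx => by
    simp only [Function.comp_apply]
    rw [← Real.rpow_mul (spectrum_pos hA x hx).le]

lemma mpow_neg_one (hA : A.PosDef) : mpow A (-1) = A⁻¹ := by
  have h := mpow_mul_mpow hA (-1) 1
  rw [mpow_one hA] at h
  norm_num [mpow_zero hA] at h
  exact (Matrix.inv_eq_left_inv h).symm

lemma mpow_inv_eq (hA : A.PosDef) (s : ℝ) : (mpow A s)⁻¹ = mpow A (-s) := by
  have h := mpow_mul_mpow hA s (-s)
  norm_num [mpow_zero hA] at h
  exact Matrix.inv_eq_right_inv h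

lemma sqrt_unique (hY : Y.PosDef) (h : Y * Y = C) : mpow C (1/2) = Y := by
  have h2 := mpow_mul_mpow hY 1 1
  rw [mpow_one hY] at h2
  norm_num at h2
  rw [← h, h2, mpow_mpow hY]
  norm_num
  exact mpow_one hY

/-- Metric geometric mean `A # B = A^{1/2} (A^{-1/2} B A^{-1/2})^{1/2} A^{1/2}`. -/
noncomputable def geomMean {n : ℕ} (A B : Matrix (Fin n) (Fin n) ℂ) :
    Matrix (Fin n) (Fin n) ℂ :=
  mpow A (1/2) * mpow (mpow A (-(1/2)) * B * mpow A (-(1/2))) (1/2) * mpow A (1/2)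

lemma posDef_conj_herm (hB : B.PosDef) (hC : C.PosDef) : (C * B * C).PosDef := by
  have h := posDef_conj hB hC.isUnit
  rwa [hC.1.eq] at h

lemma conj_posDef (hA : A.PosDef) (hB : B.PosDef) (s : ℝ) :
    (mpow A s * B * mpow A s).PosDef :=
  posDef_conj_herm hB (mpow_posDef hA s)

lemma geomMean_posDef (hA : A.PosDef) (hB : B.PosDef) : (geomMean A B).PosDef :=
  posDef_conj_herm (mpow_posDef (conj_posDef hA hB _) _) (mpow_posDef hA _)

lemma riccati (hA : A.PosDef) (hB : B.PosDef) :
    geomMean A B * A⁻¹ * geomMean A B = B := by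
  set P := mpow A (1/2) with hP
  set Q := mpow A (-(1/2)) with hQ
  set T := mpow (Q * B * Q) (1/2) with hT
  have hM : (Q * B * Q).PosDef := conj_posDef hA hB _
  have h1 : P * Q = 1 := by
    rw [hP, hQ, mpow_mul_mpow hA]; norm_num [mpow_zero hA]
  have h2 : Q * P = 1 := by
    rw [hP, hQ, mpow_mul_mpow hA]; norm_num [mpow_zero hA]
  have h3 : T * T = Q * B * Q := by
    rw [hT, mpow_mul_mpow hM]; norm_num [mpow_one hM]
  have hAinv : A⁻¹ = Q * Q := by
    rw [← mpow_neg_one hA, hQ, mpow_mul_mpow hA]; norm_num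
  have e1 : ∀ X, P * (Q * X) = X := fun X => by rw [← Matrix.mul_assoc, h1, Matrix.one_mul]
  have e2 : ∀ X, Q * (P * X) = X := fun X => by rw [← Matrix.mul_assoc, h2, Matrix.one_mul]
  have e3 : ∀ X, T * (T * X) = Q * (B * (Q * X)) := fun X => by
    rw [← Matrix.mul_assoc, h3, Matrix.mul_assoc, Matrix.mul_assoc]
  rw [geomMean, hAinv, ← hQ, ← hT, ← hP]
  simp only [Matrix.mul_assoc, e1, e2, e3, h2, Matrix.mul_one]

lemma geom_unique (hA : A.PosDef) (hB : B.PosDef) (hY : Y.PosDef)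
    (h : Y * A⁻¹ * Y = B) : Y = geomMean A B := by
  set P := mpow A (1/2) with hP
  set Q := mpow A (-(1/2)) with hQ
  have hQpos : Q.PosDef := mpow_posDef hA _
  have h1 : P * Q = 1 := by
    rw [hP, hQ, mpow_mul_mpow hA]; norm_num [mpow_zero hA]
  have h2 : Q * P = 1 := by
    rw [hP, hQ, mpow_mul_mpow hA]; norm_num [mpow_zero hA]
  have hAinv : A⁻¹ = Q * Q := by
    rw [← mpow_neg_one hA, hQ, mpow_mul_mpow hA]; norm_num
  have hZ : (Q * Y * Q).PosDef := posDef_conj_herm hY hQpos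
  have hZZ : (Q * Y * Q) * (Q * Y * Q) = Q * B * Q := by
    rw [← h, hAinv]
    simp only [Matrix.mul_assoc]
  have hT : mpow (Q * B * Q) (1/2) = Q * Y * Q := sqrt_unique hZ hZZ
  have e1 : ∀ X, P * (Q * X) = X := fun X => by rw [← Matrix.mul_assoc, h1, Matrix.one_mul]
  rw [geomMean, ← hP, ← hQ, hT]
  simp only [Matrix.mul_assoc, e1, h2, Matrix.mul_one]

/-- Weighted spectral geometric mean `A ♮_t B = (A⁻¹ # B)^t A (A⁻¹ # B)^t`. -/
noncomputable def spectralMean {n : ℕ} (t : ℝ) (A B : Matrix (Fin n) (Fin n) ℂ) :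
    Matrix (Fin n) (Fin n) ℂ :=
  mpow (geomMean A⁻¹ B) t * A * mpow (geomMean A⁻¹ B) t

theorem spectralMean_unique_solution_of_mean {n : ℕ} (hn : 1 ≤ n) (t : ℝ) (ht : t ≠ 0)
    (G : Matrix (Fin n) (Fin n) ℂ → Matrix (Fin n) (Fin n) ℂ → Matrix (Fin n) (Fin n) ℂ)
    (hGpos : ∀ A B : Matrix (Fin n) (Fin n) ℂ, A.PosDef → B.PosDef → (G A B).PosDef)
    (hGidem : ∀ A : Matrix (Fin n) (Fin n) ℂ, A.PosDef → G A A = A)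
    (hGone : ∀ A B : Matrix (Fin n) (Fin n) ℂ, A.PosDef → B.PosDef →
      G A B = 1 → B = mpow A (1 - 1 / t)) :
    ∀ A B X : Matrix (Fin n) (Fin n) ℂ, A.PosDef → B.PosDef → X.PosDef →
      G (geomMean A X⁻¹) (geomMean B X⁻¹) = 1 → X = spectralMean t A B := by
  intro A B X hA hB hX hsol
  have hXi : X⁻¹.PosDef := hX.inv
  set C := geomMean A X⁻¹ with hCdef
  set D := geomMean B X⁻¹ with hDdef
  have hCpos : C.PosDef := geomMean_posDef hA hXi
  have hDpos : D.PosDef := geomMean_posDef hB hXi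
  have hDE : D = mpow C (1 - 1/t) := hGone C D hCpos hDpos hsol
  have hRA : C * A⁻¹ * C = X⁻¹ := riccati hA hXi
  have hRB : D * B⁻¹ * D = X⁻¹ := riccati hB hXi
  set E := mpow C (1 - 1/t) with hEdef
  set F := mpow C (1/t - 1) with hFdef
  set P := mpow C (1/t) with hPdef
  set Y := mpow C (-(1/t)) with hYdef
  have hFE : F * E = 1 := by
    rw [hFdef, hEdef, mpow_mul_mpow hCpos]
    norm_num [mpow_zero hCpos]
  have hEF : E * F = 1 := by
    rw [hFdef, hEdef, mpow_mul_mpow hCpos]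
    norm_num [mpow_zero hCpos]
  have hFC : F * C = P := by
    have h := mpow_mul_mpow hCpos (1/t - 1) 1
    rw [mpow_one hCpos] at h
    rw [hFdef, h, hPdef]
    norm_num
  have hCF : C * F = P := by
    have h := mpow_mul_mpow hCpos 1 (1/t - 1)
    rw [mpow_one hCpos] at h
    rw [hFdef, h, hPdef]
    norm_num
  have h0 : E * B⁻¹ * E = C * A⁻¹ * C := by rw [← hDE, hRB, hRA]
  have hBinv : B⁻¹ = P * A⁻¹ * P := by
    calc B⁻¹ = (F * E) * B⁻¹ * (E * F) := by rw [hFE, hEF, Matrix.one_mul, Matrix.mul_one]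
    _ = F * (E * B⁻¹ * E) * F := by simp only [Matrix.mul_assoc]
    _ = F * (C * A⁻¹ * C) * F := by rw [h0]
    _ = (F * C) * A⁻¹ * (C * F) := by simp only [Matrix.mul_assoc]
    _ = P * A⁻¹ * P := by rw [hFC, hCF]
  have hAdet : IsUnit A.det := (Matrix.isUnit_iff_isUnit_det A).mp hA.isUnit
  have hAinvinv : A⁻¹⁻¹ = A := Matrix.nonsing_inv_nonsing_inv A hAdet
  have hPinv : P⁻¹ = Y := by rw [hPdef, hYdef, mpow_inv_eq hCpos]
  have hBeq : B = Y * A * Y := by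
    have hBdet : IsUnit B.det := (Matrix.isUnit_iff_isUnit_det B).mp hB.isUnit
    have : B⁻¹⁻¹ = B := Matrix.nonsing_inv_nonsing_inv B hBdet
    rw [← this, hBinv, Matrix.mul_inv_rev, Matrix.mul_inv_rev, hAinvinv, hPinv,
      Matrix.mul_assoc]
  have hYpos : Y.PosDef := mpow_posDef hCpos _
  have hYG : Y = geomMean A⁻¹ B :=
    geom_unique hA.inv hB hYpos (by rw [hAinvinv, ← hBeq])
  have hmY : mpow Y t = C⁻¹ := by
    rw [hYdef, mpow_mpow hCpos]
    have : -(1/t) * t = -1 := by field_simp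
    rw [this, mpow_neg_one hCpos]
  have hXdet : IsUnit X.det := (Matrix.isUnit_iff_isUnit_det X).mp hX.isUnit
  have hXeq : X = C⁻¹ * A * C⁻¹ := by
    have hXinvinv : X⁻¹⁻¹ = X := Matrix.nonsing_inv_nonsing_inv X hXdet
    rw [← hXinvinv, ← hRA, Matrix.mul_inv_rev, Matrix.mul_inv_rev, hAinvinv,
      Matrix.mul_assoc]
  rw [spectralMean, ← hYG, hmY, hXeq]
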